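/- Let k' ≤ k'' be integers in {0, ..., n}, let y_1, ..., y_n ∈ ℂ be pairwise distinct, let x_1, ..., x_n ∈ ℂ be arbitrary, set Y = diag(y_1, ..., y_n), i = (0,...,0,1,...,1) with n - k'' ones at the end, j = (1,...,1,0,...,0) with k' ones at the start, and define X by X_{rr} = x_r, X_{rs} = 1/(y_r - y_s) if r > k'' and s ≤ k', and X_{rs} = 0 otherwise. Then [X,Y] + i·j = 0, dim(ℂ[X,Y]·i) = n - k'', and dim(j·ℂ[X,Y]) = k'. -/

import Mathlib

open Matrix

/-- The explicit quadruples of Lemma 2.6: with `Y = diag(y)` (distinct `yᵣ`),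
`i` having `n - k''` trailing ones, `j` having `k'` leading ones, and `X` as
prescribed, one has `[X,Y] + i·j = 0`, `dim ℂ[X,Y]·i = n - k''` and
`dim j·ℂ[X,Y] = k'`. -/
theorem stmt7 (n k' k'' : ℕ) (h1 : k' ≤ k'') (h2 : k'' ≤ n)
    (y x : Fin n → ℂ) (hy : Function.Injective y)
    (Y X : Matrix (Fin n) (Fin n) ℂ) (i j : Fin n → ℂ)
    (hY : Y = Matrix.diagonal y)
    (hi : ∀ r : Fin n, i r = if k'' ≤ (r : ℕ) then 1 else 0)
    (hj : ∀ r : Fin n, j r = if (r : ℕ) < k' then 1 else 0)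
    (hX : ∀ r s : Fin n, X r s =
      if r = s then x r
      else if k'' ≤ (r : ℕ) ∧ (s : ℕ) < k' then 1 / (y r - y s) else 0) :
    X * Y - Y * X + vecMulVec i j = 0
    ∧ Module.finrank ℂ (Submodule.span ℂ
        {v : Fin n → ℂ | ∃ A ∈ Algebra.adjoin ℂ ({X, Y} : Set (Matrix (Fin n) (Fin n) ℂ)),
          v = A *ᵥ i}) = n - k''
    ∧ Module.finrank ℂ (Submodule.span ℂ
        {w : Fin n → ℂ | ∃ A ∈ Algebra.adjoin ℂ ({X, Y} : Set (Matrix (Fin n) (Fin n) ℂ)),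
          w = Matrix.vecMul j A}) = k' := by
  have hsub : ∀ r s : Fin n, r ≠ s → y r - y s ≠ 0 := fun r s hrs =>
    sub_ne_zero.mpr (fun h => hrs (hy h))
  -- every diagonal matrix lies in the adjoined algebra (Lagrange interpolation)
  have hYmem : Y ∈ Algebra.adjoin ℂ ({X, Y} : Set (Matrix (Fin n) (Fin n) ℂ)) :=
    Algebra.subset_adjoin (by simp)
  have hdiag : ∀ f : Fin n → ℂ,
      Matrix.diagonal f ∈ Algebra.adjoin ℂ ({X, Y} : Set (Matrix (Fin n) (Fin n) ℂ)) := by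
    intro f
    set p := Lagrange.interpolate Finset.univ y f with hp
    have heval : ∀ r : Fin n, Polynomial.eval (y r) p = f r := fun r =>
      Lagrange.eval_interpolate_at_node f (Set.injOn_of_injective hy) (Finset.mem_univ r)
    have hae : Polynomial.aeval Y p = Matrix.diagonal f := by
      rw [hY]
      have hdd : Matrix.diagonal y = Matrix.diagonalAlgHom ℂ y := rfl
      rw [hdd, Polynomial.aeval_algHom_apply]
      have : Polynomial.aeval y p = f := by
        funext r
        rw [Polynomial.aeval_fn_apply]
        simpa [Polynomial.coe_aeval_eq_eval] using heval r
      rw [this]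
      rfl
    rw [← hae]
    exact Algebra.adjoin_mono (Set.singleton_subset_iff.mpr (by simp))
      (Polynomial.aeval_mem_adjoin_singleton ℂ Y)
  -- the commutation relation
  refine ⟨?_, ?_, ?_⟩
  · ext r s
    simp only [Matrix.add_apply, Matrix.sub_apply, hY, Matrix.mul_diagonal,
      Matrix.diagonal_mul, Matrix.vecMulVec_apply, Matrix.zero_apply, hi, hj, hX]
    by_cases hrs : r = s
    · subst hrs
      rw [if_pos rfl]
      by_cases hk : k'' ≤ (r : ℕ)
      · have hk2 : ¬ (r : ℕ) < k' := by omega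
        simp only [if_pos hk, if_neg hk2]
        ring
      · simp only [if_neg hk]
        ring
    · rw [if_neg hrs]
      by_cases hc : k'' ≤ (r : ℕ) ∧ (s : ℕ) < k'
      · rw [if_pos hc, if_pos hc.1, if_pos hc.2]
        have := hsub r s hrs
        field_simp
        ring
      · rw [if_neg hc]
        push_neg at hc
        by_cases h1' : k'' ≤ (r : ℕ)
        · simp [h1', hc h1']
        · simp [h1']
  -- second part: column space
  · have hiV : ∀ r : Fin n, (r : ℕ) < k'' → i r = 0 := by
      intro r hr; rw [hi, if_neg (by omega)]
    have hpres : ∀ A ∈ Algebra.adjoin ℂ ({X, Y} : Set (Matrix (Fin n) (Fin n) ℂ)),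
        ∀ v : Fin n → ℂ, (∀ r : Fin n, (r : ℕ) < k'' → v r = 0) →
        ∀ r : Fin n, (r : ℕ) < k'' → (A *ᵥ v) r = 0 := by
      intro A hA
      induction hA using Algebra.adjoin_induction with
      | mem M hM =>
        intro v hv r hr
        rcases hM with rfl | hM
        · -- M = X
          show (∑ s, M r s * v s) = 0
          refine Finset.sum_eq_zero fun s _ => ?_
          by_cases hs : r = s
          · subst hs; rw [hv r hr, mul_zero]
          · rw [hX, if_neg hs, if_neg (by omega), zero_mul]
        · -- M = Y
          rcases hM with rfl
          rw [hY, Matrix.mulVec_diagonal, hv r hr, mul_zero]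
      | algebraMap c =>
        intro v hv r hr
        rw [Matrix.algebraMap_eq_diagonal, Matrix.mulVec_diagonal, hv r hr, mul_zero]
      | add A B _ _ hA hB =>
        intro v hv r hr
        rw [Matrix.add_mulVec, Pi.add_apply, hA v hv r hr, hB v hv r hr, add_zero]
      | mul A B _ _ hA hB =>
        intro v hv r hr
        rw [← Matrix.mulVec_mulVec]
        exact hA _ (hB v hv) r hr
    have hspan : Submodule.span ℂ
        {v : Fin n → ℂ | ∃ A ∈ Algebra.adjoin ℂ ({X, Y} : Set (Matrix (Fin n) (Fin n) ℂ)),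
          v = A *ᵥ i}
        = Submodule.span ℂ (Set.range
            (fun t : {r : Fin n // k'' ≤ (r : ℕ)} => (Pi.single (t : Fin n) (1 : ℂ) : Fin n → ℂ))) := by
      apply le_antisymm
      · rw [Submodule.span_le]
        rintro v ⟨A, hA, rfl⟩
        have hv : ∀ r : Fin n, (r : ℕ) < k'' → (A *ᵥ i) r = 0 := hpres A hA i hiV
        have hsum : A *ᵥ i = ∑ r : Fin n, (A *ᵥ i) r • (Pi.single r (1 : ℂ) : Fin n → ℂ) := by
          funext s
          simp [Pi.single_apply, Finset.sum_ite_eq']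
        rw [SetLike.mem_coe, hsum]
        refine Submodule.sum_mem _ fun r _ => ?_
        by_cases hr : k'' ≤ (r : ℕ)
        · exact Submodule.smul_mem _ _ (Submodule.subset_span ⟨⟨r, hr⟩, rfl⟩)
        · rw [hv r (by omega), zero_smul]; exact Submodule.zero_mem _
      · rw [Submodule.span_le]
        rintro v ⟨t, rfl⟩
        apply Submodule.subset_span
        refine ⟨Matrix.diagonal (Pi.single (t : Fin n) (1 : ℂ)), hdiag _, ?_⟩
        funext s
        beta_reduce
        rw [Matrix.mulVec_diagonal]
        rcases eq_or_ne s (t : Fin n) with rfl | hst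
        · rw [Pi.single_eq_same, hi, if_pos t.2, mul_one]
        · rw [Pi.single_eq_of_ne hst, zero_mul]
    have hLI : LinearIndependent ℂ
        (fun t : {r : Fin n // k'' ≤ (r : ℕ)} => (Pi.single (t : Fin n) (1 : ℂ) : Fin n → ℂ)) := by
      have h0 := (Pi.basisFun ℂ (Fin n)).linearIndependent
      have h2 := h0.comp (Subtype.val : {r : Fin n // k'' ≤ (r : ℕ)} → Fin n)
        Subtype.val_injective
      simpa [Function.comp_def] using h2
    have hcard : Fintype.card {r : Fin n // k'' ≤ (r : ℕ)} = n - k'' := by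
      have e : {r : Fin n // k'' ≤ (r : ℕ)} ≃ Fin (n - k'') :=
        { toFun := fun t => ⟨(t : Fin n).val - k'', by
            have := (t : Fin n).isLt; have := t.2; omega⟩
          invFun := fun m => ⟨⟨m.val + k'', by have := m.isLt; omega⟩,
            Nat.le_add_left k'' m.val⟩
          left_inv := fun t => by
            apply Subtype.ext; apply Fin.ext
            have := t.2; simp; omega
          right_inv := fun m => by
            apply Fin.ext; simp }
      rw [Fintype.card_congr e, Fintype.card_fin]
    rw [hspan, finrank_span_eq_card hLI, hcard]
  -- third part: row space
  · have hjW : ∀ r : Fin n, k' ≤ (r : ℕ) → j r = 0 := by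
      intro r hr; rw [hj, if_neg (by omega)]
    have hpres : ∀ A ∈ Algebra.adjoin ℂ ({X, Y} : Set (Matrix (Fin n) (Fin n) ℂ)),
        ∀ w : Fin n → ℂ, (∀ r : Fin n, k' ≤ (r : ℕ) → w r = 0) →
        ∀ s : Fin n, k' ≤ (s : ℕ) → (Matrix.vecMul w A) s = 0 := by
      intro A hA
      induction hA using Algebra.adjoin_induction with
      | mem M hM =>
        intro w hw s hs
        rcases hM with rfl | hM
        · -- M = X
          show (∑ r, w r * M r s) = 0
          refine Finset.sum_eq_zero fun r _ => ?_
          by_cases hr : k' ≤ (r : ℕ)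
          · rw [hw r hr, zero_mul]
          · have hrs : r ≠ s := fun h => hr (h ▸ hs)
            rw [hX, if_neg hrs, if_neg (by omega), mul_zero]
        · -- M = Y
          rcases hM with rfl
          rw [hY, Matrix.vecMul_diagonal, hw s hs, zero_mul]
      | algebraMap c =>
        intro w hw s hs
        rw [Matrix.algebraMap_eq_diagonal, Matrix.vecMul_diagonal, hw s hs, zero_mul]
      | add A B _ _ hA hB =>
        intro w hw s hs
        rw [Matrix.vecMul_add, Pi.add_apply, hA w hw s hs, hB w hw s hs, add_zero]
      | mul A B _ _ hA hB =>
        intro w hw s hs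
        rw [← Matrix.vecMul_vecMul]
        exact hB _ (hA w hw) s hs
    have hspan : Submodule.span ℂ
        {w : Fin n → ℂ | ∃ A ∈ Algebra.adjoin ℂ ({X, Y} : Set (Matrix (Fin n) (Fin n) ℂ)),
          w = Matrix.vecMul j A}
        = Submodule.span ℂ (Set.range
            (fun t : {r : Fin n // (r : ℕ) < k'} => (Pi.single (t : Fin n) (1 : ℂ) : Fin n → ℂ))) := by
      apply le_antisymm
      · rw [Submodule.span_le]
        rintro w ⟨A, hA, rfl⟩
        have hw : ∀ s : Fin n, k' ≤ (s : ℕ) → (Matrix.vecMul j A) s = 0 := hpres A hA j hjW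
        have hsum : Matrix.vecMul j A = ∑ r : Fin n, (Matrix.vecMul j A) r • (Pi.single r (1 : ℂ) : Fin n → ℂ) := by
          funext s
          simp [Pi.single_apply, Finset.sum_ite_eq']
        rw [SetLike.mem_coe, hsum]
        refine Submodule.sum_mem _ fun r _ => ?_
        by_cases hr : (r : ℕ) < k'
        · exact Submodule.smul_mem _ _ (Submodule.subset_span ⟨⟨r, hr⟩, rfl⟩)
        · rw [hw r (by omega), zero_smul]; exact Submodule.zero_mem _
      · rw [Submodule.span_le]
        rintro w ⟨t, rfl⟩
        apply Submodule.subset_span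
        refine ⟨Matrix.diagonal (Pi.single (t : Fin n) (1 : ℂ)), hdiag _, ?_⟩
        funext s
        beta_reduce
        rw [Matrix.vecMul_diagonal]
        rcases eq_or_ne s (t : Fin n) with rfl | hst
        · rw [Pi.single_eq_same, hj, if_pos t.2, one_mul]
        · rw [Pi.single_eq_of_ne hst, mul_zero]
    have hLI : LinearIndependent ℂ
        (fun t : {r : Fin n // (r : ℕ) < k'} => (Pi.single (t : Fin n) (1 : ℂ) : Fin n → ℂ)) := by
      have h0 := (Pi.basisFun ℂ (Fin n)).linearIndependent
      have h2 := h0.comp (Subtype.val : {r : Fin n // (r : ℕ) < k'} → Fin n)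
        Subtype.val_injective
      simpa [Function.comp_def] using h2
    have hcard : Fintype.card {r : Fin n // (r : ℕ) < k'} = k' := by
      have e : {r : Fin n // (r : ℕ) < k'} ≃ Fin k' :=
        { toFun := fun t => ⟨(t : Fin n).val, t.2⟩
          invFun := fun m => ⟨⟨m.val, by have := m.isLt; omega⟩, m.isLt⟩
          left_inv := fun t => by apply Subtype.ext; apply Fin.ext; rfl
          right_inv := fun m => by apply Fin.ext; rfl }
      rw [Fintype.card_congr e, Fintype.card_fin]
    rw [hspan, finrank_span_eq_card hLI, hcard]
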